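/- For every p > 0, sup_{x ∈ ℝ} | Φ(p x) − Φ(x) | ≤ (2πe)^{−1/2} · [ (p − 1)·I(p ≥ 1) + (1/p − 1)·I(0 < p < 1) ] ≤ (2πe)^{−1/2} · | p − 1/p |. -/

import Mathlib

open MeasureTheory ProbabilityTheory Filter Real Set

noncomputable section

/-- Covariance of two real-valued random variables. -/
def covRV {Ω : Type*} [MeasurableSpace Ω] (μ : Measure Ω) (f g : Ω → ℝ) : ℝ :=
  (∫ ω, f ω * g ω ∂μ) - (∫ ω, f ω ∂μ) * (∫ ω, g ω ∂μ)

/-- Variance of a real-valued random variable. -/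
def varRV {Ω : Type*} [MeasurableSpace Ω] (μ : Measure Ω) (f : Ω → ℝ) : ℝ :=
  covRV μ f f

/-- The sequence `X` is associated: every finite subcollection has nonnegative covariance
between coordinatewise nondecreasing functions (whenever it is defined). -/
def IsAssociated {Ω : Type*} [MeasurableSpace Ω] (μ : Measure Ω) (X : ℕ → Ω → ℝ) : Prop :=
  ∀ (n : ℕ) (idx : Fin n → ℕ) (g h : (Fin n → ℝ) → ℝ),
    Monotone g → Monotone h →
    Integrable (fun ω => g fun i => X (idx i) ω) μ →
    Integrable (fun ω => h fun i => X (idx i) ω) μ →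
    Integrable (fun ω => g (fun i => X (idx i) ω) * h (fun i => X (idx i) ω)) μ →
    0 ≤ covRV μ (fun ω => g fun i => X (idx i) ω) (fun ω => h fun i => X (idx i) ω)

/-- Strict stationarity of the sequence `X`. -/
def IsStationarySeq {Ω : Type*} [MeasurableSpace Ω] (μ : Measure Ω) (X : ℕ → Ω → ℝ) : Prop :=
  ∀ k : ℕ, Measure.map (fun ω (i : ℕ) => X (i + k) ω) μ
      = Measure.map (fun ω (i : ℕ) => X i ω) μ

/-- Indicator of the event `X i ≤ x`, as a real random variable. -/
def indLE {Ω : Type*} (X : ℕ → Ω → ℝ) (i : ℕ) (x : ℝ) (ω : Ω) : ℝ :=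
  if X i ω ≤ x then 1 else 0

/-- Generalized inverse (quantile function) `F⁻¹(p) = inf {x : F x ≥ p}`. -/
def genQuantile (F : ℝ → ℝ) (p : ℝ) : ℝ := sInf {x : ℝ | p ≤ F x}

/-- Empirical distribution function of `X_1, …, X_n`. -/
def empCDF {Ω : Type*} (X : ℕ → Ω → ℝ) (n : ℕ) (x : ℝ) (ω : Ω) : ℝ :=
  (n : ℝ)⁻¹ * ∑ i ∈ Finset.Icc 1 n, indLE X i x ω

/-- Sample `p`-th quantile `F_n⁻¹(p)`. -/
def sampleQuantile {Ω : Type*} (X : ℕ → Ω → ℝ) (n : ℕ) (p : ℝ) (ω : Ω) : ℝ :=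
  sInf {x : ℝ | p ≤ empCDF X n x ω}

/-- `σ²(x) = Var(I(X₁ ≤ x)) + 2 ∑_{j=2}^∞ Cov(I(X₁ ≤ x), I(X_j ≤ x))`. -/
def sigmaSq {Ω : Type*} [MeasurableSpace Ω] (μ : Measure Ω) (X : ℕ → Ω → ℝ) (x : ℝ) : ℝ :=
  varRV μ (indLE X 1 x) + 2 * ∑' j : ℕ, covRV μ (indLE X 1 x) (indLE X (j + 2) x)

/-- Standard normal distribution function `Φ`. -/
def stdGaussCDF (x : ℝ) : ℝ := ((gaussianReal 0 1) (Iic x)).toReal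

/-- `Y_i(t) = I(X_i ≤ x_p + t a_p n^{-1/2}) - E[I(X_i ≤ x_p + t a_p n^{-1/2})]`. -/
def Ystat {Ω : Type*} [MeasurableSpace Ω] (μ : Measure Ω) (X : ℕ → Ω → ℝ)
    (xp ap : ℝ) (n : ℕ) (t : ℝ) (i : ℕ) (ω : Ω) : ℝ :=
  indLE X i (xp + t * ap * (n : ℝ) ^ (-(1/2) : ℝ)) ω
    - ∫ ω', indLE X i (xp + t * ap * (n : ℝ) ^ (-(1/2) : ℝ)) ω' ∂μ

/-- `σ²_{(n,t)} = Var(Y₁(t)) + 2 ∑_{j=2}^∞ Cov(Y₁(t), Y_j(t))`. -/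
def sigmaSqNT {Ω : Type*} [MeasurableSpace Ω] (μ : Measure Ω) (X : ℕ → Ω → ℝ)
    (xp ap : ℝ) (n : ℕ) (t : ℝ) : ℝ :=
  varRV μ (Ystat μ X xp ap n t 1)
    + 2 * ∑' j : ℕ, covRV μ (Ystat μ X xp ap n t 1) (Ystat μ X xp ap n t (j + 2))


namespace Stmt13Aux

lemma stdGaussCDF_eq (x : ℝ) :
    stdGaussCDF x = ∫ u in Iic x, gaussianPDFReal 0 1 u := by
  rw [stdGaussCDF, gaussianReal_apply_eq_integral 0 one_ne_zero, ENNReal.toReal_ofReal]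
  exact setIntegral_nonneg measurableSet_Iic fun u _ => gaussianPDFReal_nonneg 0 1 u

lemma cdf_sub (a b : ℝ) :
    stdGaussCDF b - stdGaussCDF a = ∫ u in a..b, gaussianPDFReal 0 1 u := by
  rw [stdGaussCDF_eq, stdGaussCDF_eq]
  exact intervalIntegral.integral_Iic_sub_Iic
    (integrable_gaussianPDFReal 0 1).integrableOn (integrable_gaussianPDFReal 0 1).integrableOn

lemma t_exp_le (t : ℝ) (ht : 0 ≤ t) : t * Real.exp (-(t ^ 2) / 2) ≤ Real.exp (-(1 / 2)) := by
  have h1 : t ≤ Real.exp ((t ^ 2 - 1) / 2) := by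
    have := Real.add_one_le_exp ((t ^ 2 - 1) / 2)
    nlinarith [sq_nonneg (t - 1)]
  calc t * Real.exp (-(t ^ 2) / 2) ≤ Real.exp ((t ^ 2 - 1) / 2) * Real.exp (-(t ^ 2) / 2) := by
        exact mul_le_mul_of_nonneg_right h1 (Real.exp_pos _).le
    _ = Real.exp (-(1 / 2)) := by rw [← Real.exp_add]; ring_nf

lemma pdf_one : gaussianPDFReal 0 1 1 = (2 * Real.pi * Real.exp 1) ^ (-(1/2) : ℝ) := by
  rw [gaussianPDFReal]
  have h2 : (0:ℝ) < 2 * Real.pi := by positivity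
  rw [Real.mul_rpow h2.le (Real.exp_pos 1).le, Real.exp_one_rpow, Real.rpow_neg h2.le,
    ← Real.sqrt_eq_rpow]
  norm_num

lemma pdf_le (x u : ℝ) (h : x ^ 2 ≤ u ^ 2) :
    gaussianPDFReal 0 1 u ≤ gaussianPDFReal 0 1 x := by
  rw [gaussianPDFReal, gaussianPDFReal]
  have : Real.exp (-(u - 0) ^ 2 / (2 * 1)) ≤ Real.exp (-(x - 0) ^ 2 / (2 * 1)) := by
    apply Real.exp_le_exp.mpr; nlinarith
  have hpos : (0:ℝ) < (Real.sqrt (2 * Real.pi * 1))⁻¹ := by positivity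
  exact mul_le_mul_of_nonneg_left this hpos.le

lemma absx_pdf_le (x : ℝ) :
    |x| * gaussianPDFReal 0 1 x ≤ (2 * Real.pi * Real.exp 1) ^ (-(1/2) : ℝ) := by
  rw [← pdf_one, gaussianPDFReal, gaussianPDFReal]
  simp only [NNReal.coe_one, mul_one, sub_zero]
  rw [← sq_abs x]
  have h2 := t_exp_le |x| (abs_nonneg x)
  have hpos : (0:ℝ) < (Real.sqrt (2 * Real.pi))⁻¹ := by positivity
  calc |x| * ((Real.sqrt (2 * Real.pi))⁻¹ * Real.exp (-|x| ^ 2 / 2))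
      = (Real.sqrt (2 * Real.pi))⁻¹ * (|x| * Real.exp (-(|x| ^ 2) / 2)) := by ring
    _ ≤ (Real.sqrt (2 * Real.pi))⁻¹ * Real.exp (-(1/2)) :=
        mul_le_mul_of_nonneg_left h2 hpos.le
    _ = (Real.sqrt (2 * Real.pi))⁻¹ * Real.exp (-1 ^ 2 / 2) := by norm_num

lemma key (q : ℝ) (hq : 1 ≤ q) (x : ℝ) :
    |stdGaussCDF (q * x) - stdGaussCDF x|
      ≤ (2 * Real.pi * Real.exp 1) ^ (-(1/2) : ℝ) * (q - 1) := by
  have hint : ∀ a b : ℝ, IntervalIntegrable (gaussianPDFReal 0 1) volume a b :=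
    fun a b => (integrable_gaussianPDFReal 0 1).intervalIntegrable
  rcases le_or_gt 0 x with hx | hx
  · have hab : x ≤ q * x := by nlinarith
    rw [cdf_sub, abs_of_nonneg (intervalIntegral.integral_nonneg hab
      fun u _ => gaussianPDFReal_nonneg 0 1 u)]
    have hmono : ∀ u ∈ Icc x (q * x), gaussianPDFReal 0 1 u ≤ gaussianPDFReal 0 1 x := by
      intro u hu; exact pdf_le x u (by nlinarith [hu.1, hu.2])
    calc (∫ u in x..(q*x), gaussianPDFReal 0 1 u)
        ≤ ∫ _ in x..(q*x), gaussianPDFReal 0 1 x :=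
          intervalIntegral.integral_mono_on hab (hint _ _) intervalIntegrable_const hmono
      _ = (q * x - x) * gaussianPDFReal 0 1 x := by
          rw [intervalIntegral.integral_const]; simp [smul_eq_mul]
      _ = (q - 1) * (|x| * gaussianPDFReal 0 1 x) := by rw [abs_of_nonneg hx]; ring
      _ ≤ (q - 1) * ((2 * Real.pi * Real.exp 1) ^ (-(1/2) : ℝ)) :=
          mul_le_mul_of_nonneg_left (absx_pdf_le x) (by linarith)
      _ = (2 * Real.pi * Real.exp 1) ^ (-(1/2) : ℝ) * (q - 1) := by ring
  · have hab : q * x ≤ x := by nlinarith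
    rw [abs_sub_comm, cdf_sub, abs_of_nonneg (intervalIntegral.integral_nonneg hab
      fun u _ => gaussianPDFReal_nonneg 0 1 u)]
    have hmono : ∀ u ∈ Icc (q * x) x, gaussianPDFReal 0 1 u ≤ gaussianPDFReal 0 1 x := by
      intro u hu; exact pdf_le x u (by nlinarith [hu.1, hu.2])
    calc (∫ u in (q*x)..x, gaussianPDFReal 0 1 u)
        ≤ ∫ _ in (q*x)..x, gaussianPDFReal 0 1 x :=
          intervalIntegral.integral_mono_on hab (hint _ _) intervalIntegrable_const hmono
      _ = (x - q * x) * gaussianPDFReal 0 1 x := by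
          rw [intervalIntegral.integral_const]; simp [smul_eq_mul]
      _ = (q - 1) * (|x| * gaussianPDFReal 0 1 x) := by rw [abs_of_neg hx]; ring
      _ ≤ (q - 1) * ((2 * Real.pi * Real.exp 1) ^ (-(1/2) : ℝ)) :=
          mul_le_mul_of_nonneg_left (absx_pdf_le x) (by linarith)
      _ = (2 * Real.pi * Real.exp 1) ^ (-(1/2) : ℝ) * (q - 1) := by ring

end Stmt13Aux

theorem stmt13_gaussian_cdf_scaling (p : ℝ) (hp : 0 < p) :
    (∀ x : ℝ, |stdGaussCDF (p * x) - stdGaussCDF x|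
        ≤ (2 * Real.pi * Real.exp 1) ^ (-(1/2) : ℝ) *
          ((p - 1) * (if 1 ≤ p then (1:ℝ) else 0) + (1 / p - 1) * (if p < 1 then (1:ℝ) else 0)))
    ∧ (2 * Real.pi * Real.exp 1) ^ (-(1/2) : ℝ) *
          ((p - 1) * (if 1 ≤ p then (1:ℝ) else 0) + (1 / p - 1) * (if p < 1 then (1:ℝ) else 0))
        ≤ (2 * Real.pi * Real.exp 1) ^ (-(1/2) : ℝ) * |p - 1 / p| := by
  have hC : (0:ℝ) ≤ (2 * Real.pi * Real.exp 1) ^ (-(1/2) : ℝ) :=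
    Real.rpow_nonneg (by positivity) _
  rcases le_or_gt 1 p with h1 | h1
  · have hnlt : ¬ p < 1 := not_lt.mpr h1
    simp only [if_pos h1, if_neg hnlt, mul_one, mul_zero, add_zero]
    constructor
    · intro x; exact Stmt13Aux.key p h1 x
    · apply mul_le_mul_of_nonneg_left _ hC
      have : 1 / p ≤ 1 := by
        rw [div_le_one hp]; exact h1
      calc p - 1 ≤ p - 1 / p := by linarith
        _ ≤ |p - 1 / p| := le_abs_self _
  · have hnle : ¬ 1 ≤ p := not_le.mpr h1
    simp only [if_neg hnle, if_pos h1, mul_one, mul_zero, zero_add]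
    have hq : 1 ≤ 1 / p := by rw [le_div_iff₀ hp]; linarith
    constructor
    · intro x
      have := Stmt13Aux.key (1 / p) hq (p * x)
      have hx : 1 / p * (p * x) = x := by field_simp
      rw [hx, abs_sub_comm] at this
      exact this
    · apply mul_le_mul_of_nonneg_left _ hC
      have hp1 : p ≤ 1 / p := by
        rw [le_div_iff₀ hp]; nlinarith
      calc 1 / p - 1 ≤ 1 / p - p := by linarith
        _ = |p - 1 / p| := by rw [abs_sub_comm, abs_of_nonneg (by linarith)]


end
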